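/- Let U ≥ 1 and D > 1, and let μ ∈ ℝ, σ² ∈ ℝ satisfy |μ| ≤ U and D⁻¹ ≤ σ² ≤ D. Then the symmetric 2×2 matrix H = σ⁻⁴·[[2μ² + σ², −μ], [−μ, 1/2]] satisfies, for all v ∈ ℝ², (1/(D·(4U² + 2D + 1)))·‖v‖² ≤ vᵀ H v ≤ (9/2)·U²·D²·‖v‖². Consequently the mirror map A*, whose Hessian on Ω̃ is the block-diagonal matrix with these 2×2 blocks (one per coordinate, with μ = ξ_i, σ² = Ξ_ii − ξ_i²), is C_S-strongly convex and C_L-smooth with respect to the Euclidean norm on Ω̃, where C_S = (D(4U² + 2D + 1))⁻¹ and C_L = (9/2)U²D². -/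

import Mathlib

open MeasureTheory

noncomputable section

/-- The space of mean-field expectation parameters `ω = (ξ, Ξ) ∈ ℝ^d × ℝ^d`,
realized as a Euclidean space indexed by `Fin d ⊕ Fin d`. -/
abbrev MFParam (d : ℕ) := EuclideanSpace ℝ (Fin d ⊕ Fin d)

def xiP {d : ℕ} (ω : MFParam d) (i : Fin d) : ℝ := ω (Sum.inl i)

def XiP {d : ℕ} (ω : MFParam d) (i : Fin d) : ℝ := ω (Sum.inr i)

def varP {d : ℕ} (ω : MFParam d) (i : Fin d) : ℝ := XiP ω i - (xiP ω i) ^ 2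

/-- The bounded parameter domain `Ω̃`. -/
def OmegaT (d : ℕ) (U D : ℝ) : Set (MFParam d) :=
  {ω | ∀ i, |xiP ω i| ≤ U ∧ D⁻¹ ≤ varP ω i ∧ varP ω i ≤ D}

/-- The `2 × 2` Hessian block `H = σ⁻⁴ [[2μ² + σ², −μ], [−μ, 1/2]]` of the mirror map. -/
def hessBlock (μ σ2 : ℝ) : Matrix (Fin 2) (Fin 2) ℝ :=
  (σ2 ^ 2)⁻¹ • !![2 * μ ^ 2 + σ2, -μ; -μ, 1 / 2]

/-- The quadratic form of the block-diagonal Hessian `∇²A*(ω)` of the mirror map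
`A*(ξ,Ξ) = −(1/2)∑ᵢ log(Ξ_ii − ξ_i²)`, evaluated at `v ∈ ℝ^{2d}`. -/
def hessQuadForm {d : ℕ} (ω : MFParam d) (v : MFParam d) : ℝ :=
  ∑ i : Fin d, ((varP ω i) ^ 2)⁻¹ *
    ((2 * (xiP ω i) ^ 2 + varP ω i) * (v (Sum.inl i)) ^ 2
      - 2 * xiP ω i * v (Sum.inl i) * v (Sum.inr i) + (1 / 2) * (v (Sum.inr i)) ^ 2)

set_option maxHeartbeats 1000000 in
lemma keyBlock (U D μ s a b : ℝ) (hU : 1 ≤ U) (hD : 1 < D) (hμ : |μ| ≤ U)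
    (h1 : D⁻¹ ≤ s) (h2 : s ≤ D) :
    (1 / (D * (4 * U ^ 2 + 2 * D + 1))) * (a ^ 2 + b ^ 2)
      ≤ (s ^ 2)⁻¹ * ((2 * μ ^ 2 + s) * a ^ 2 - 2 * μ * a * b + (1 / 2) * b ^ 2) ∧
    (s ^ 2)⁻¹ * ((2 * μ ^ 2 + s) * a ^ 2 - 2 * μ * a * b + (1 / 2) * b ^ 2)
      ≤ (9 / 2) * U ^ 2 * D ^ 2 * (a ^ 2 + b ^ 2) := by
  have hD0 : (0:ℝ) < D := lt_trans one_pos hD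
  have hs : 0 < s := lt_of_lt_of_le (inv_pos.mpr hD0) h1
  have hμ2 : μ ^ 2 ≤ U ^ 2 := by nlinarith [abs_nonneg μ, sq_abs μ]
  have hU0 : (0:ℝ) < U := lt_of_lt_of_le one_pos hU
  have hrw : (s ^ 2)⁻¹ * ((2 * μ ^ 2 + s) * a ^ 2 - 2 * μ * a * b + (1 / 2) * b ^ 2)
      = s⁻¹ * a ^ 2 + 2 * (s ^ 2)⁻¹ * (μ * a - b / 2) ^ 2 := by
    field_simp
    ring
  rw [hrw]
  have hiu : s⁻¹ ≤ D := by
    have := inv_anti₀ (inv_pos.mpr hD0) h1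
    rwa [inv_inv] at this
  have hil : D⁻¹ ≤ s⁻¹ := inv_anti₀ hs h2
  have hiu2 : (s ^ 2)⁻¹ ≤ D ^ 2 := by
    have h' : (D ^ 2)⁻¹ ≤ s ^ 2 := by
      rw [← inv_pow]; exact pow_le_pow_left₀ (inv_pos.mpr hD0).le h1 2
    have := inv_anti₀ (inv_pos.mpr (pow_pos hD0 2)) h'
    rwa [inv_inv] at this
  have hil2 : (D ^ 2)⁻¹ ≤ (s ^ 2)⁻¹ := inv_anti₀ (pow_pos hs 2) (pow_le_pow_left₀ hs.le h2 2)
  constructor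
  · -- lower bound
    have step1 : D⁻¹ * a ^ 2 + 2 * (D ^ 2)⁻¹ * (μ * a - b / 2) ^ 2
        ≤ s⁻¹ * a ^ 2 + 2 * (s ^ 2)⁻¹ * (μ * a - b / 2) ^ 2 := by
      gcongr <;> positivity
    refine le_trans ?_ step1
    have poly : D * (a ^ 2 + b ^ 2)
        ≤ D * (4 * U ^ 2 + 2 * D + 1) * a ^ 2
          + 2 * (4 * U ^ 2 + 2 * D + 1) * (μ * a - b / 2) ^ 2 := by
      nlinarith [sq_nonneg (D * μ * a + 2 * U ^ 2 * (μ * a - b / 2)),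
        mul_nonneg (mul_nonneg (by positivity : (0:ℝ) ≤ 4 * D * U ^ 2 + 2 * D ^ 2)
          (sub_nonneg.2 hμ2)) (sq_nonneg a),
        mul_nonneg hU0.le (sq_nonneg (μ * a - b / 2)),
        mul_pos hU0 hU0, sq_nonneg (μ * a - b / 2), sq_nonneg a]
    have h3 : (1 / (D * (4 * U ^ 2 + 2 * D + 1))) * (a ^ 2 + b ^ 2)
        = (D * (a ^ 2 + b ^ 2)) / (D ^ 2 * (4 * U ^ 2 + 2 * D + 1)) := by
      field_simp
    have h4 : D⁻¹ * a ^ 2 + 2 * (D ^ 2)⁻¹ * (μ * a - b / 2) ^ 2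
        = (D * (4 * U ^ 2 + 2 * D + 1) * a ^ 2
            + 2 * (4 * U ^ 2 + 2 * D + 1) * (μ * a - b / 2) ^ 2)
            / (D ^ 2 * (4 * U ^ 2 + 2 * D + 1)) := by
      field_simp
    rw [h3, h4]
    apply div_le_div_of_nonneg_right poly <;> positivity
  · -- upper bound
    have step1 : s⁻¹ * a ^ 2 + 2 * (s ^ 2)⁻¹ * (μ * a - b / 2) ^ 2
        ≤ D * a ^ 2 + 2 * D ^ 2 * (μ * a - b / 2) ^ 2 := by
      gcongr <;> positivity
    refine le_trans step1 ?_
    have hU2 : (1:ℝ) ≤ U ^ 2 := by nlinarith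
    have hA : (0:ℝ) ≤ D ^ 2 * (μ * a + b) ^ 2 := mul_nonneg (sq_nonneg D) (sq_nonneg (μ * a + b))
    have hB : (0:ℝ) ≤ D ^ 2 * (U ^ 2 - μ ^ 2) * a ^ 2 :=
      mul_nonneg (mul_nonneg (sq_nonneg D) (sub_nonneg.2 hμ2)) (sq_nonneg a)
    have hC : (0:ℝ) ≤ (D ^ 2 * U ^ 2 - D) * a ^ 2 :=
      mul_nonneg (by nlinarith : (0:ℝ) ≤ D ^ 2 * U ^ 2 - D) (sq_nonneg a)
    have hE : (0:ℝ) ≤ D ^ 2 * (U ^ 2 - 1) * b ^ 2 :=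
      mul_nonneg (mul_nonneg (sq_nonneg D) (sub_nonneg.2 hU2)) (sq_nonneg b)
    have hF : (0:ℝ) ≤ D ^ 2 * b ^ 2 := mul_nonneg (sq_nonneg D) (sq_nonneg b)
    nlinarith [hA, hB, hC, hE, hF]

/-- Lemma C.1, Euclidean strong convexity and smoothness of the mirror
map `A*` on `Ω̃`: each Hessian block satisfies
`C_S ‖v‖² ≤ vᵀ H v ≤ C_L ‖v‖²` with `C_S = (D(4U² + 2D + 1))⁻¹`, `C_L = (9/2)U²D²`;
consequently the block-diagonal Hessian quadratic form of `A*` obeys the same bounds at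
every point of `Ω̃`, i.e. `A*` is `C_S`-strongly convex and `C_L`-smooth in the Euclidean
norm on `Ω̃`. -/
theorem mirror_map_strongly_convex_and_smooth
    {d : ℕ} (hd : 1 ≤ d) (U D : ℝ) (hU : 1 ≤ U) (hD : 1 < D) :
    (∀ (μ σ2 : ℝ), |μ| ≤ U → D⁻¹ ≤ σ2 → σ2 ≤ D → ∀ v : Fin 2 → ℝ,
      (1 / (D * (4 * U ^ 2 + 2 * D + 1))) * (v 0 ^ 2 + v 1 ^ 2)
          ≤ dotProduct v ((hessBlock μ σ2).mulVec v) ∧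
      dotProduct v ((hessBlock μ σ2).mulVec v)
          ≤ (9 / 2) * U ^ 2 * D ^ 2 * (v 0 ^ 2 + v 1 ^ 2)) ∧
    (∀ ω ∈ OmegaT d U D, ∀ v : MFParam d,
      (1 / (D * (4 * U ^ 2 + 2 * D + 1))) * ‖v‖ ^ 2 ≤ hessQuadForm ω v ∧
      hessQuadForm ω v ≤ (9 / 2) * U ^ 2 * D ^ 2 * ‖v‖ ^ 2) := by
  constructor
  · intro μ σ2 hμ h1 h2 v
    have hdot : dotProduct v ((hessBlock μ σ2).mulVec v)
        = (σ2 ^ 2)⁻¹ * ((2 * μ ^ 2 + σ2) * (v 0) ^ 2 - 2 * μ * (v 0) * (v 1)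
            + (1 / 2) * (v 1) ^ 2) := by
      simp [hessBlock, dotProduct, Matrix.mulVec, Fin.sum_univ_two]
      ring
    rw [hdot]
    exact keyBlock U D μ σ2 (v 0) (v 1) hU hD hμ h1 h2
  · intro ω hω v
    have hnorm : ‖v‖ ^ 2 = ∑ i : Fin d, ((v (Sum.inl i)) ^ 2 + (v (Sum.inr i)) ^ 2) := by
      rw [EuclideanSpace.norm_eq, Real.sq_sqrt (by positivity)]
      simp [Real.norm_eq_abs, sq_abs, Fintype.sum_sum_type, Finset.sum_add_distrib]
    have key : ∀ i : Fin d,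
        (1 / (D * (4 * U ^ 2 + 2 * D + 1))) * ((v (Sum.inl i)) ^ 2 + (v (Sum.inr i)) ^ 2)
          ≤ ((varP ω i) ^ 2)⁻¹ *
            ((2 * (xiP ω i) ^ 2 + varP ω i) * (v (Sum.inl i)) ^ 2
              - 2 * xiP ω i * v (Sum.inl i) * v (Sum.inr i) + (1 / 2) * (v (Sum.inr i)) ^ 2) ∧
        ((varP ω i) ^ 2)⁻¹ *
            ((2 * (xiP ω i) ^ 2 + varP ω i) * (v (Sum.inl i)) ^ 2
              - 2 * xiP ω i * v (Sum.inl i) * v (Sum.inr i) + (1 / 2) * (v (Sum.inr i)) ^ 2)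
          ≤ (9 / 2) * U ^ 2 * D ^ 2 * ((v (Sum.inl i)) ^ 2 + (v (Sum.inr i)) ^ 2) := by
      intro i
      obtain ⟨ha, hb, hc⟩ := hω i
      exact keyBlock U D (xiP ω i) (varP ω i) (v (Sum.inl i)) (v (Sum.inr i)) hU hD ha hb hc
    constructor
    · rw [hnorm, hessQuadForm, Finset.mul_sum]
      exact Finset.sum_le_sum fun i _ => (key i).1
    · rw [hnorm, hessQuadForm, Finset.mul_sum]
      exact Finset.sum_le_sum fun i _ => (key i).2

end
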